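/- Let μ be a probability measure on subsets of [n], let l ≤ n/2, and define Z^i_{j,k} = ∑ {μ(X)μ(Y) : |X| = j, |Y| = k, |X ∩ Y| = i}. Then ∑_{i=0}^l β_i Z^i_{l,l} ≥ 0, where β_i = (i(n+1) − l(l+1))/(l − i + 1). -/

import Mathlib

open Finset

lemma hockey {N m : ℕ} (h : m ≤ N) :
    ∑ j ∈ Finset.range (m+1), (N-j).choose (m-j) = (N+1).choose m := by
  have h1 : ∀ j ∈ Finset.range (m+1), (N-j).choose (m-j) = (N-j).choose (N-m) := by
    intro j hj
    have hjm : j ≤ m := Nat.lt_succ_iff.mp (Finset.mem_range.mp hj)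
    have : (N-j) - (m-j) = N - m := by omega
    rw [← this, Nat.choose_symm (by omega)]
  rw [Finset.sum_congr rfl h1]
  have h2 : ∑ j ∈ Finset.range (m+1), (N-j).choose (N-m)
      = ∑ i ∈ Finset.Icc (N-m) N, i.choose (N-m) := by
    apply Finset.sum_nbij' (fun j => N - j) (fun i => N - i)
    · intro j hj; simp only [Finset.mem_range] at hj; simp only [Finset.mem_Icc]; omega
    · intro i hi; simp only [Finset.mem_Icc] at hi; simp only [Finset.mem_range]; omega
    · intro j hj; simp only [Finset.mem_range] at hj; omega
    · intro i hi; simp only [Finset.mem_Icc] at hi; omega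
    · intro j hj; rfl
  rw [h2, Nat.sum_Icc_choose]
  have : N - m + 1 = (N+1) - m := by omega
  rw [this, Nat.choose_symm (by omega)]

lemma choose_div_sum {N m : ℕ} (h : m ≤ N) :
    ∑ j ∈ Finset.range (m+1), (m.choose j : ℝ) / (N.choose j) = ((N:ℝ)+1) / ((N:ℝ) - m + 1) := by
  have hNm : (N.choose m : ℝ) ≠ 0 := Nat.cast_ne_zero.2 (Nat.choose_pos h).ne'
  have h1 : ∀ j ∈ Finset.range (m+1), (m.choose j : ℝ) / (N.choose j)
      = ((N-j).choose (m-j) : ℝ) / (N.choose m) := by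
    intro j hj
    have hjm : j ≤ m := Nat.lt_succ_iff.mp (Finset.mem_range.mp hj)
    have key := Nat.choose_mul (n := N) hjm
    have hNj : (N.choose j : ℝ) ≠ 0 := Nat.cast_ne_zero.2 (Nat.choose_pos (hjm.trans h)).ne'
    have keyR : (N.choose m : ℝ) * (m.choose j) = (N.choose j) * ((N-j).choose (m-j)) := by
      exact_mod_cast congrArg (Nat.cast (R := ℝ)) key
    field_simp
    linarith [keyR]
  rw [Finset.sum_congr rfl h1, ← Finset.sum_div]
  have h2 : ∑ j ∈ Finset.range (m+1), ((N-j).choose (m-j) : ℝ) = ((N+1).choose m : ℝ) := by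
    exact_mod_cast congrArg (Nat.cast (R := ℝ)) (hockey h)
  rw [h2]
  have key2 := Nat.choose_mul_succ_eq N m
  have key2R : (N.choose m : ℝ) * ((N:ℝ)+1) = ((N+1).choose m : ℝ) * ((N:ℝ) - m + 1) := by
    have hcast : ((N + 1 - m : ℕ) : ℝ) = (N:ℝ) - m + 1 := by
      push_cast [Nat.cast_sub (by omega : m ≤ N + 1)]; ring
    have := congrArg (Nat.cast (R := ℝ)) key2
    push_cast [Nat.cast_sub (by omega : m ≤ N + 1)] at this
    linarith [this]
  have hd : ((N:ℝ) - m + 1) ≠ 0 := by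
    have : (m:ℝ) ≤ N := Nat.cast_le.2 h
    linarith
  field_simp
  linarith [key2R]

lemma betaId {n l i : ℕ} (hln : l ≤ n) (hil : i ≤ l) :
    ((i:ℝ)*((n:ℝ)+1) - (l:ℝ)*((l:ℝ)+1)) / ((l:ℝ) - i + 1)
    = ((n:ℝ) - l + 1) *
      ∑ j ∈ Finset.range (l+1), ((i.choose j : ℝ)/(l.choose j) - (l.choose j : ℝ)/(n.choose j)) := by
  rw [Finset.sum_sub_distrib, choose_div_sum hln]
  have h1 : ∑ j ∈ Finset.range (l+1), (i.choose j : ℝ)/(l.choose j)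
      = ∑ j ∈ Finset.range (i+1), (i.choose j : ℝ)/(l.choose j) := by
    symm
    apply Finset.sum_subset (Finset.range_subset_range.2 (by omega))
    intro j _ hj
    simp only [Finset.mem_range, not_lt] at hj
    rw [Nat.choose_eq_zero_of_lt (by omega)]
    simp
  rw [h1, choose_div_sum hil]
  have hd1 : ((l:ℝ) - i + 1) ≠ 0 := by
    have : (i:ℝ) ≤ l := Nat.cast_le.2 hil
    linarith
  have hd2 : ((n:ℝ) - l + 1) ≠ 0 := by
    have : (l:ℝ) ≤ n := Nat.cast_le.2 hln
    linarith
  field_simp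
  ring

/-- `Z^i_{j,k}(μ) = ∑ {μ(X)μ(Y) : |X| = j, |Y| = k, |X ∩ Y| = i}`. -/
noncomputable def Zpair {n : ℕ} (μ : Finset (Fin n) → ℝ) (i j k : ℕ) : ℝ :=
  ∑ p ∈ (univ ×ˢ univ).filter
      (fun p : Finset (Fin n) × Finset (Fin n) =>
        p.1.card = j ∧ p.2.card = k ∧ (p.1 ∩ p.2).card = i),
    μ p.1 * μ p.2

def Fl (n l : ℕ) : Finset (Finset (Fin n)) := univ.filter (fun X => X.card = l)

noncomputable def Asum {n : ℕ} (μ : Finset (Fin n) → ℝ) (l : ℕ) (T : Finset (Fin n)) : ℝ :=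
  ∑ X ∈ (Fl n l).filter (fun X => T ⊆ X), μ X

noncomputable def Ssum {n : ℕ} (μ : Finset (Fin n) → ℝ) (l : ℕ) : ℝ :=
  ∑ X ∈ Fl n l, μ X

lemma L1 {n : ℕ} (μ : Finset (Fin n) → ℝ) (l : ℕ) (g : ℕ → ℝ) :
    ∑ i ∈ Finset.range (l+1), g i * Zpair μ i l l
    = ∑ p ∈ (Fl n l) ×ˢ (Fl n l), g ((p.1 ∩ p.2).card) * (μ p.1 * μ p.2) := by
  have hset : ∀ i, ((Fl n l) ×ˢ (Fl n l)).filter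
      (fun p : Finset (Fin n) × Finset (Fin n) => (p.1 ∩ p.2).card = i)
      = (univ ×ˢ univ).filter
        (fun p : Finset (Fin n) × Finset (Fin n) =>
          p.1.card = l ∧ p.2.card = l ∧ (p.1 ∩ p.2).card = i) := by
    intro i; ext p
    simp only [Fl, Finset.mem_filter, Finset.mem_product, Finset.mem_univ, true_and, and_assoc]
  have hmaps : ∀ p ∈ (Fl n l) ×ˢ (Fl n l), (p.1 ∩ p.2).card ∈ Finset.range (l+1) := by
    intro p hp
    rw [Finset.mem_product] at hp
    have h1 : p.1.card = l := (Finset.mem_filter.mp hp.1).2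
    have : (p.1 ∩ p.2).card ≤ l := h1 ▸ Finset.card_le_card Finset.inter_subset_left
    simp only [Finset.mem_range]; omega
  calc ∑ i ∈ Finset.range (l+1), g i * Zpair μ i l l
      = ∑ i ∈ Finset.range (l+1), ∑ p ∈ ((Fl n l) ×ˢ (Fl n l)).filter
          (fun p : Finset (Fin n) × Finset (Fin n) => (p.1 ∩ p.2).card = i),
          g ((p.1 ∩ p.2).card) * (μ p.1 * μ p.2) := by
        apply Finset.sum_congr rfl
        intro i _
        rw [Zpair, ← hset, Finset.mul_sum]
        apply Finset.sum_congr rfl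
        intro p hp
        rw [(Finset.mem_filter.mp hp).2]
    _ = _ := Finset.sum_fiberwise_of_maps_to hmaps _

lemma myIteMul {a b : Prop} [Decidable a] [Decidable b] (x y : ℝ) :
    (if a then x else 0) * (if b then y else 0) = if a ∧ b then x * y else 0 := by
  split_ifs with h1 h2 h3 h4 <;> simp_all

lemma L2 {n : ℕ} (μ : Finset (Fin n) → ℝ) (l j : ℕ) :
    ∑ T ∈ Finset.powersetCard j (univ : Finset (Fin n)), Asum μ l T
    = (l.choose j : ℝ) * Ssum μ l := by
  unfold Asum Ssum
  simp_rw [Finset.sum_filter]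
  rw [Finset.sum_comm]
  rw [Finset.mul_sum]
  apply Finset.sum_congr rfl
  intro X hX
  rw [← Finset.sum_filter]
  have hfil : (Finset.powersetCard j (univ : Finset (Fin n))).filter (fun T => T ⊆ X)
      = Finset.powersetCard j X := by
    ext T
    simp only [Finset.mem_filter, Finset.mem_powersetCard, Finset.subset_univ, true_and]
    tauto
  rw [hfil, Finset.sum_const, Finset.card_powersetCard, (Finset.mem_filter.mp hX).2,
    nsmul_eq_mul]

lemma L3 {n : ℕ} (μ : Finset (Fin n) → ℝ) (l j : ℕ) :
    ∑ T ∈ Finset.powersetCard j (univ : Finset (Fin n)), (Asum μ l T)^2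
    = ∑ p ∈ (Fl n l) ×ˢ (Fl n l), ((p.1 ∩ p.2).card.choose j : ℝ) * (μ p.1 * μ p.2) := by
  have hA : ∀ T : Finset (Fin n), (Asum μ l T)^2
      = ∑ p ∈ (Fl n l) ×ˢ (Fl n l),
          if T ⊆ p.1 ∧ T ⊆ p.2 then μ p.1 * μ p.2 else 0 := by
    intro T
    rw [sq, Asum, Finset.sum_filter, Finset.sum_mul_sum, ← Finset.sum_product']
    apply Finset.sum_congr rfl
    intro p _
    exact myIteMul _ _
  simp_rw [hA]
  rw [Finset.sum_comm]
  apply Finset.sum_congr rfl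
  intro p _
  rw [← Finset.sum_filter]
  have hfil : (Finset.powersetCard j (univ : Finset (Fin n))).filter
      (fun T => T ⊆ p.1 ∧ T ⊆ p.2) = Finset.powersetCard j (p.1 ∩ p.2) := by
    ext T
    simp only [Finset.mem_filter, Finset.mem_powersetCard, Finset.subset_univ, true_and,
      Finset.subset_inter_iff]
    tauto
  rw [hfil, Finset.sum_const, Finset.card_powersetCard, nsmul_eq_mul]

lemma L4 {n : ℕ} (μ : Finset (Fin n) → ℝ) (l : ℕ) :
    ∑ p ∈ (Fl n l) ×ˢ (Fl n l), μ p.1 * μ p.2 = (Ssum μ l)^2 := by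
  rw [sq, Ssum, Finset.sum_mul_sum, ← Finset.sum_product']

theorem beta_Z_sum_nonneg {n : ℕ} (l : ℕ) (h2l : 2 * l ≤ n)
    (μ : Finset (Fin n) → ℝ) (hpos : ∀ X, 0 ≤ μ X) (hsum : ∑ X : Finset (Fin n), μ X = 1) :
    0 ≤ ∑ i ∈ Finset.range (l + 1),
        (((i : ℝ) * (n + 1) - l * (l + 1)) / ((l : ℝ) - i + 1)) * Zpair μ i l l := by
  have hln : l ≤ n := by omega
  have key := L1 μ l (fun i => ((i : ℝ) * ((n:ℝ) + 1) - (l:ℝ) * ((l:ℝ) + 1)) / ((l : ℝ) - i + 1))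

  rw [key]
  have step1 : ∑ p ∈ (Fl n l) ×ˢ (Fl n l),
      (((((p.1 ∩ p.2).card : ℕ) : ℝ) * ((n:ℝ) + 1) - (l:ℝ) * ((l:ℝ) + 1)) /
        ((l : ℝ) - ((p.1 ∩ p.2).card : ℕ) + 1)) * (μ p.1 * μ p.2)
      = ((n:ℝ) - l + 1) * ∑ j ∈ Finset.range (l+1),
          ((∑ T ∈ Finset.powersetCard j (univ : Finset (Fin n)), (Asum μ l T)^2)
              / (l.choose j : ℝ)
            - (l.choose j : ℝ)/(n.choose j) * (Ssum μ l)^2) := by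
    calc ∑ p ∈ (Fl n l) ×ˢ (Fl n l),
        (((((p.1 ∩ p.2).card : ℕ) : ℝ) * ((n:ℝ) + 1) - (l:ℝ) * ((l:ℝ) + 1)) /
          ((l : ℝ) - ((p.1 ∩ p.2).card : ℕ) + 1)) * (μ p.1 * μ p.2)
        = ∑ p ∈ (Fl n l) ×ˢ (Fl n l), ((n:ℝ) - l + 1) *
            ∑ j ∈ Finset.range (l+1),
              (((p.1 ∩ p.2).card.choose j : ℝ)/(l.choose j) - (l.choose j : ℝ)/(n.choose j))
                * (μ p.1 * μ p.2) := by
          apply Finset.sum_congr rfl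
          intro p hp
          rw [Finset.mem_product] at hp
          have h1 : p.1.card = l := (Finset.mem_filter.mp hp.1).2
          have hip : (p.1 ∩ p.2).card ≤ l := h1 ▸ Finset.card_le_card Finset.inter_subset_left
          rw [betaId hln hip, mul_assoc, Finset.sum_mul]
      _ = ((n:ℝ) - l + 1) * ∑ j ∈ Finset.range (l+1), ∑ p ∈ (Fl n l) ×ˢ (Fl n l),
            (((p.1 ∩ p.2).card.choose j : ℝ)/(l.choose j) - (l.choose j : ℝ)/(n.choose j))
              * (μ p.1 * μ p.2) := by
          rw [← Finset.mul_sum, Finset.sum_comm]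
      _ = _ := by
          congr 1
          apply Finset.sum_congr rfl
          intro j _
          rw [L3, ← L4 μ l, Finset.sum_div, Finset.mul_sum, ← Finset.sum_sub_distrib]
          apply Finset.sum_congr rfl
          intro p _
          ring
  rw [step1]
  apply mul_nonneg
  · have : (l:ℝ) ≤ n := Nat.cast_le.2 hln
    linarith
  apply Finset.sum_nonneg
  intro j hj
  have hjl : j ≤ l := Nat.lt_succ_iff.mp (Finset.mem_range.mp hj)
  have hclp : (0:ℝ) < (l.choose j : ℝ) := Nat.cast_pos.2 (Nat.choose_pos hjl)
  have hcnp : (0:ℝ) < (n.choose j : ℝ) := Nat.cast_pos.2 (Nat.choose_pos (hjl.trans hln))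
  have hCS := sq_sum_le_card_mul_sum_sq
    (s := Finset.powersetCard j (univ : Finset (Fin n))) (f := Asum μ l)
  rw [L2] at hCS
  have hcard : ((Finset.powersetCard j (univ : Finset (Fin n))).card : ℝ) = (n.choose j : ℝ) := by
    rw [Finset.card_powersetCard, Finset.card_univ, Fintype.card_fin]
  rw [hcard] at hCS
  rw [sub_nonneg, div_mul_eq_mul_div, div_le_div_iff₀ hcnp hclp]
  have hr : (l.choose j : ℝ) * (Ssum μ l)^2 * (l.choose j : ℝ)
      = ((l.choose j : ℝ) * Ssum μ l)^2 := by ring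
  rw [hr]
  calc ((l.choose j : ℝ) * Ssum μ l)^2
      ≤ (n.choose j : ℝ) * ∑ T ∈ Finset.powersetCard j (univ : Finset (Fin n)),
          (Asum μ l T)^2 := hCS
    _ = (∑ T ∈ Finset.powersetCard j (univ : Finset (Fin n)), (Asum μ l T)^2)
          * (n.choose j : ℝ) := by ring
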